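/- arXiv:2405.04399 — 6 statements merged into one kernel-verified Lean document; each statement's English description precedes it below -/
import Mathlib

section
/- If A and B are real m×n matrices with ‖A - B‖_F ≤ h (Frobenius norm), and the largest singular values of A and B are listed in non-increasing order as ρ_1(A) ≥ ... ≥ ρ_M(A) and ρ_1(B) ≥ ... ≥ ρ_M(B) with M = min(m,n), then ∑_{k=1}^{M} (ρ_k(A) - ρ_k(B))² ≤ h². -/
open Matrix BigOperators Filter Set

noncomputable def frob {m n : ℕ} (A : Matrix (Fin m) (Fin n) ℝ) : ℝ :=
  Real.sqrt (∑ i, ∑ j, (A i j) ^ 2)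

def IsPinv {m n : ℕ} (A : Matrix (Fin m) (Fin n) ℝ) (B : Matrix (Fin n) (Fin m) ℝ) : Prop :=
  A * B * A = A ∧ B * A * B = B ∧ (A * B)ᵀ = A * B ∧ (B * A)ᵀ = B * A

def IsOrth {k : ℕ} (U : Matrix (Fin k) (Fin k) ℝ) : Prop :=
  U * Uᵀ = 1 ∧ Uᵀ * U = 1

noncomputable def svdDiag {m n : ℕ} (ρ : Fin (min m n) → ℝ) : Matrix (Fin m) (Fin n) ℝ :=
  Matrix.of fun i j => if h : (i : ℕ) = (j : ℕ) ∧ (i : ℕ) < min m n then ρ ⟨i, h.2⟩ else 0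

/-- `ρ` is the non-increasing list of singular values of `A`. -/
def HasSingularValues {m n : ℕ} (A : Matrix (Fin m) (Fin n) ℝ) (ρ : Fin (min m n) → ℝ) : Prop :=
  (∀ k, 0 ≤ ρ k) ∧ Antitone ρ ∧
    ∃ (U : Matrix (Fin m) (Fin m) ℝ) (V : Matrix (Fin n) (Fin n) ℝ), IsOrth U ∧ IsOrth V ∧ A = U * svdDiag ρ * Vᵀ

noncomputable def enorm {m : ℕ} (v : Fin m → ℝ) : ℝ :=
  Real.sqrt (∑ i, (v i) ^ 2)

/-! ### Auxiliary lemmas for Mirsky's inequality -/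

section MirAux
open Finset

lemma mir_svdDiag_apply {m n : ℕ} (ρ : Fin (min m n) → ℝ) (a : Fin m) (b : Fin n) :
    svdDiag ρ a b = ∑ k : Fin (min m n),
      if a = Fin.castLE (min_le_left m n) k ∧ b = Fin.castLE (min_le_right m n) k
      then ρ k else 0 := by
  by_cases h : (a : ℕ) = (b : ℕ) ∧ (a : ℕ) < min m n
  · rw [show svdDiag ρ a b = ρ ⟨a, h.2⟩ from dif_pos h]
    rw [Finset.sum_eq_single (⟨(a : ℕ), h.2⟩ : Fin (min m n))]
    · rw [if_pos]
      constructor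
      · apply Fin.ext; rfl
      · apply Fin.ext; exact h.1.symm
    · intro k _ hk
      rw [if_neg]
      rintro ⟨h1, _⟩
      apply hk
      apply Fin.ext
      have := congrArg (Fin.val) h1
      simpa using this.symm
    · intro hmem; exact absurd (Finset.mem_univ _) hmem
  · rw [show svdDiag ρ a b = 0 from dif_neg h]
    rw [Finset.sum_eq_zero]
    intro k _
    rw [if_neg]
    rintro ⟨h1, h2⟩
    apply h
    subst h1
    subst h2
    exact ⟨rfl, k.2⟩

lemma mir_entry {m n : ℕ} (U : Matrix (Fin m) (Fin m) ℝ) (V : Matrix (Fin n) (Fin n) ℝ)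
    (ρ : Fin (min m n) → ℝ) (i : Fin m) (j : Fin n) :
    (U * svdDiag ρ * Vᵀ) i j = ∑ k : Fin (min m n),
      ρ k * U i (Fin.castLE (min_le_left m n) k) * V j (Fin.castLE (min_le_right m n) k) := by
  calc (U * svdDiag ρ * Vᵀ) i j
      = ∑ b, ∑ a, ∑ k : Fin (min m n),
        if a = Fin.castLE (min_le_left m n) k ∧ b = Fin.castLE (min_le_right m n) k
        then ρ k * U i a * V j b else 0 := by
        simp only [mul_apply, transpose_apply]
        refine Finset.sum_congr rfl fun b _ => ?_
        rw [Finset.sum_mul]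
        refine Finset.sum_congr rfl fun a _ => ?_
        rw [mir_svdDiag_apply, Finset.mul_sum, Finset.sum_mul]
        refine Finset.sum_congr rfl fun k _ => ?_
        split_ifs <;> ring
    _ = ∑ b, ∑ k : Fin (min m n),
        if b = Fin.castLE (min_le_right m n) k
        then ρ k * U i (Fin.castLE (min_le_left m n) k) * V j b else 0 := by
        refine Finset.sum_congr rfl fun b _ => ?_
        rw [Finset.sum_comm]
        refine Finset.sum_congr rfl fun k _ => ?_
        simp only [ite_and]
        rw [Finset.sum_ite_eq']
        simp
    _ = _ := by
        rw [Finset.sum_comm]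
        refine Finset.sum_congr rfl fun k _ => ?_
        rw [Finset.sum_ite_eq']
        simp

lemma mir_cross_gen {I J K L : Type*} [Fintype I] [Fintype J] [Fintype K] [Fintype L]
    (f : K → I → ℝ) (g : K → J → ℝ) (f' : L → I → ℝ) (g' : L → J → ℝ) :
    ∑ i, ∑ j, (∑ k, f k i * g k j) * (∑ l, f' l i * g' l j)
      = ∑ k, ∑ l, (∑ i, f k i * f' l i) * (∑ j, g k j * g' l j) := by
  calc ∑ i, ∑ j, (∑ k, f k i * g k j) * (∑ l, f' l i * g' l j)
      = ∑ i, ∑ j, ∑ k, ∑ l, (f k i * g k j) * (f' l i * g' l j) := by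
        refine Finset.sum_congr rfl fun i _ => Finset.sum_congr rfl fun j _ => ?_
        rw [Finset.sum_mul_sum]
    _ = ∑ i, ∑ k, ∑ l, ∑ j, (f k i * g k j) * (f' l i * g' l j) := by
        refine Finset.sum_congr rfl fun i _ => ?_
        rw [Finset.sum_comm]
        refine Finset.sum_congr rfl fun k _ => ?_
        rw [Finset.sum_comm]
    _ = ∑ k, ∑ l, ∑ i, ∑ j, (f k i * g k j) * (f' l i * g' l j) := by
        rw [Finset.sum_comm]
        refine Finset.sum_congr rfl fun k _ => ?_
        rw [Finset.sum_comm]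
    _ = ∑ k, ∑ l, (∑ i, f k i * f' l i) * (∑ j, g k j * g' l j) := by
        refine Finset.sum_congr rfl fun k _ => Finset.sum_congr rfl fun l _ => ?_
        rw [Finset.sum_mul_sum]
        refine Finset.sum_congr rfl fun i _ => Finset.sum_congr rfl fun j _ => ?_
        ring

lemma mir_bessel {m M : ℕ} (U1 U2 : Matrix (Fin m) (Fin m) ℝ)
    (h1 : IsOrth U1) (h2 : IsOrth U2) (e : Fin M → Fin m) (he : Function.Injective e)
    (k : Fin M) :
    ∑ l : Fin M, (∑ i, U1 i (e k) * U2 i (e l)) ^ 2 ≤ 1 := by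
  set W := U1ᵀ * U2 with hWdef
  have hW : ∀ p q, W p q = ∑ i, U1 i p * U2 i q := by
    intro p q; simp [hWdef, mul_apply, transpose_apply]
  have hWWt : W * Wᵀ = 1 := by
    have : (U1ᵀ * U2) * (U1ᵀ * U2)ᵀ = U1ᵀ * (U2 * U2ᵀ) * U1 := by
      rw [transpose_mul, transpose_transpose]; noncomm_ring
    rw [hWdef, this, h2.1, mul_one, h1.2]
  have hfull : ∑ q : Fin m, (W (e k) q) ^ 2 = 1 := by
    have := congrFun (congrFun hWWt (e k)) (e k)
    rw [mul_apply, one_apply_eq] at this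
    rw [← this]
    refine Finset.sum_congr rfl fun q _ => ?_
    rw [transpose_apply, sq]
  calc ∑ l : Fin M, (∑ i, U1 i (e k) * U2 i (e l)) ^ 2
      = ∑ l : Fin M, (W (e k) (e l)) ^ 2 := by
        refine Finset.sum_congr rfl fun l _ => by rw [hW]
    _ = ∑ q ∈ Finset.univ.image e, (W (e k) q) ^ 2 := by
        rw [Finset.sum_image (fun a _ b _ h => he h)]
    _ ≤ ∑ q : Fin m, (W (e k) q) ^ 2 := by
        refine Finset.sum_le_sum_of_subset_of_nonneg (Finset.subset_univ _) ?_
        intro q _ _; positivity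
    _ = 1 := hfull

lemma mir_diag {m M : ℕ} (U : Matrix (Fin m) (Fin m) ℝ) (h1 : IsOrth U)
    (e : Fin M → Fin m) (he : Function.Injective e) (k l : Fin M) :
    (∑ i, U i (e k) * U i (e l)) = if k = l then 1 else 0 := by
  have : ∑ i, U i (e k) * U i (e l) = (Uᵀ * U) (e k) (e l) := by
    simp [mul_apply, transpose_apply]
  rw [this, h1.2, one_apply]
  by_cases h : k = l
  · simp [h]
  · rw [if_neg (fun hc => h (he hc)), if_neg h]

lemma mir_reorg (M : ℕ) (P Q E : ℕ → ℕ → ℝ) :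
    ∑ k ∈ range M, ∑ l ∈ range M,
      (∑ s ∈ range M, P s k) * (∑ t ∈ range M, Q t l) * E k l
    = ∑ s ∈ range M, ∑ t ∈ range M, ∑ k ∈ range M, ∑ l ∈ range M,
        P s k * Q t l * E k l := by
  calc ∑ k ∈ range M, ∑ l ∈ range M,
      (∑ s ∈ range M, P s k) * (∑ t ∈ range M, Q t l) * E k l
      = ∑ k ∈ range M, ∑ l ∈ range M, ∑ s ∈ range M, ∑ t ∈ range M,
          P s k * Q t l * E k l := by
        refine Finset.sum_congr rfl fun k _ => Finset.sum_congr rfl fun l _ => ?_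
        rw [Finset.sum_mul_sum, Finset.sum_mul]
        refine Finset.sum_congr rfl fun s _ => ?_
        rw [Finset.sum_mul]
    _ = ∑ k ∈ range M, ∑ s ∈ range M, ∑ t ∈ range M, ∑ l ∈ range M,
          P s k * Q t l * E k l := by
        refine Finset.sum_congr rfl fun k _ => ?_
        rw [Finset.sum_comm]
        refine Finset.sum_congr rfl fun s _ => ?_
        rw [Finset.sum_comm]
    _ = ∑ s ∈ range M, ∑ t ∈ range M, ∑ k ∈ range M, ∑ l ∈ range M,
          P s k * Q t l * E k l := by
        rw [Finset.sum_comm]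
        refine Finset.sum_congr rfl fun s _ => ?_
        rw [Finset.sum_comm]

lemma mir_filter_le (M t : ℕ) (ht : t < M) :
    (range M).filter (fun l => l ≤ t) = range (t + 1) := by
  ext x; simp [Nat.lt_succ_iff]; omega

lemma mir_filter_le' (M k : ℕ) :
    (range M).filter (fun s => k ≤ s) = Finset.Ico k M := by
  ext x; simp [Finset.mem_Ico]; omega

lemma mir_substoch (M : ℕ) (a b : ℕ → ℝ)
    (ha1 : ∀ s, a (s + 1) ≤ a s) (ha0 : ∀ s, 0 ≤ a s) (haM : a M = 0)
    (hb1 : ∀ s, b (s + 1) ≤ b s) (hb0 : ∀ s, 0 ≤ b s) (hbM : b M = 0)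
    (D : ℕ → ℕ → ℝ) (hD0 : ∀ k l, 0 ≤ D k l)
    (hrow : ∀ k, k < M → ∑ l ∈ range M, D k l ≤ 1)
    (hcol : ∀ l, l < M → ∑ k ∈ range M, D k l ≤ 1) :
    ∑ k ∈ range M, ∑ l ∈ range M, a k * b l * D k l
      ≤ ∑ k ∈ range M, a k * b k := by
  have habel : ∀ c : ℕ → ℝ, c M = 0 → ∀ k, k < M →
      c k = ∑ s ∈ range M, if k ≤ s then c s - c (s + 1) else 0 := by
    intro c hcM k hk
    rw [← Finset.sum_filter, mir_filter_le' M k]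
    rw [Finset.sum_Ico_eq_sub _ hk.le, Finset.sum_range_sub' c, Finset.sum_range_sub' c]
    rw [hcM]; ring
  set α : ℕ → ℝ := fun s => a s - a (s + 1) with hα
  set β : ℕ → ℝ := fun s => b s - b (s + 1) with hβ
  have hα0 : ∀ s, 0 ≤ α s := fun s => sub_nonneg.2 (ha1 s)
  have hβ0 : ∀ s, 0 ≤ β s := fun s => sub_nonneg.2 (hb1 s)
  set P : ℕ → ℕ → ℝ := fun s k => if k ≤ s then α s else 0 with hP
  set Q : ℕ → ℕ → ℝ := fun t l => if l ≤ t then β t else 0 with hQ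
  set S : ℕ → ℕ → ℝ := fun s t => ∑ k ∈ range (s + 1), ∑ l ∈ range (t + 1), D k l with hS
  have hLHS : ∑ k ∈ range M, ∑ l ∈ range M, a k * b l * D k l
      = ∑ s ∈ range M, ∑ t ∈ range M, α s * β t * S s t := by
    have e1 : ∑ k ∈ range M, ∑ l ∈ range M, a k * b l * D k l
        = ∑ k ∈ range M, ∑ l ∈ range M,
            (∑ s ∈ range M, P s k) * (∑ t ∈ range M, Q t l) * D k l := by
      refine Finset.sum_congr rfl fun k hk => Finset.sum_congr rfl fun l hl => ?_
      rw [← habel a haM k (mem_range.1 hk), ← habel b hbM l (mem_range.1 hl)]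
    rw [e1, mir_reorg]
    refine Finset.sum_congr rfl fun s hs => Finset.sum_congr rfl fun t ht => ?_
    have inner : ∀ k, ∑ l ∈ range M, P s k * Q t l * D k l
        = P s k * β t * ∑ l ∈ range (t + 1), D k l := by
      intro k
      rw [← mir_filter_le M t (mem_range.1 ht), Finset.sum_filter, Finset.mul_sum]
      refine Finset.sum_congr rfl fun l _ => ?_
      simp only [hQ]
      split_ifs <;> ring
    calc ∑ k ∈ range M, ∑ l ∈ range M, P s k * Q t l * D k l
        = ∑ k ∈ range M, P s k * β t * ∑ l ∈ range (t + 1), D k l := by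
          exact Finset.sum_congr rfl fun k _ => inner k
      _ = ∑ k ∈ range (s + 1), α s * β t * ∑ l ∈ range (t + 1), D k l := by
          rw [← mir_filter_le M s (mem_range.1 hs), Finset.sum_filter]
          refine Finset.sum_congr rfl fun k _ => ?_
          simp only [hP]
          split_ifs <;> ring
      _ = α s * β t * S s t := by rw [hS, Finset.mul_sum]
  have hRHS : ∑ k ∈ range M, a k * b k
      = ∑ s ∈ range M, ∑ t ∈ range M, α s * β t * ((min (s + 1) (t + 1) : ℕ) : ℝ) := by
    have e1 : ∑ k ∈ range M, a k * b k
        = ∑ k ∈ range M, ∑ s ∈ range M, ∑ t ∈ range M, P s k * Q t k := by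
      refine Finset.sum_congr rfl fun k hk => ?_
      rw [habel a haM k (mem_range.1 hk), habel b hbM k (mem_range.1 hk),
        Finset.sum_mul_sum]
    rw [e1, Finset.sum_comm]
    refine Finset.sum_congr rfl fun s hs => ?_
    rw [Finset.sum_comm]
    refine Finset.sum_congr rfl fun t ht => ?_
    have hmin : min s t < M := lt_of_le_of_lt (min_le_left s t) (mem_range.1 hs)
    calc ∑ k ∈ range M, P s k * Q t k
        = ∑ k ∈ range M, if k ≤ min s t then α s * β t else 0 := by
          refine Finset.sum_congr rfl fun k _ => ?_
          simp only [hP, hQ, Nat.le_min]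
          by_cases h1 : k ≤ s <;> by_cases h2 : k ≤ t <;> simp [h1, h2]
      _ = ∑ k ∈ range (min s t + 1), α s * β t := by
          rw [← mir_filter_le M (min s t) hmin, Finset.sum_filter]
      _ = α s * β t * ((min (s + 1) (t + 1) : ℕ) : ℝ) := by
          rw [Finset.sum_const, card_range, nsmul_eq_mul]
          rw [show min s t + 1 = min (s + 1) (t + 1) by omega]
          ring
  rw [hLHS, hRHS]
  refine Finset.sum_le_sum fun s hs => Finset.sum_le_sum fun t ht => ?_
  have hSle : S s t ≤ ((min (s + 1) (t + 1) : ℕ) : ℝ) := by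
    have hb1' : S s t ≤ ((s + 1 : ℕ) : ℝ) := by
      calc S s t ≤ ∑ k ∈ range (s + 1), (1 : ℝ) := by
            refine Finset.sum_le_sum fun k hk => ?_
            calc ∑ l ∈ range (t + 1), D k l ≤ ∑ l ∈ range M, D k l := by
                  refine Finset.sum_le_sum_of_subset_of_nonneg
                    (Finset.range_subset_range.2 (mem_range.1 ht)) fun l _ _ => hD0 k l
              _ ≤ 1 := hrow k (lt_of_lt_of_le (mem_range.1 hk) (mem_range.1 hs))
        _ = ((s + 1 : ℕ) : ℝ) := by simp
    have hb2' : S s t ≤ ((t + 1 : ℕ) : ℝ) := by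
      rw [hS]
      simp only []
      rw [Finset.sum_comm]
      calc ∑ l ∈ range (t + 1), ∑ k ∈ range (s + 1), D k l
          ≤ ∑ l ∈ range (t + 1), (1 : ℝ) := by
            refine Finset.sum_le_sum fun l hl => ?_
            calc ∑ k ∈ range (s + 1), D k l ≤ ∑ k ∈ range M, D k l := by
                  refine Finset.sum_le_sum_of_subset_of_nonneg
                    (Finset.range_subset_range.2 (mem_range.1 hs)) fun k _ _ => hD0 k l
              _ ≤ 1 := hcol l (lt_of_lt_of_le (mem_range.1 hl) (mem_range.1 ht))
        _ = ((t + 1 : ℕ) : ℝ) := by simp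
    rw [Nat.cast_min]
    exact le_min hb1' hb2'
  exact mul_le_mul_of_nonneg_left hSle (mul_nonneg (hα0 s) (hβ0 t))

end MirAux

theorem stmt0 {m n : ℕ} (A B : Matrix (Fin m) (Fin n) ℝ) (h : ℝ)
    (ρA ρB : Fin (min m n) → ℝ)
    (hA : HasSingularValues A ρA) (hB : HasSingularValues B ρB)
    (hab : frob (A - B) ≤ h) :
    ∑ k, (ρA k - ρB k) ^ 2 ≤ h ^ 2 := by
  obtain ⟨hρA0, hρAm, U1, V1, hU1, hV1, hAeq⟩ := hA
  obtain ⟨hρB0, hρBm, U2, V2, hU2, hV2, hBeq⟩ := hB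
  set em : Fin (min m n) → Fin m := Fin.castLE (min_le_left m n) with hem
  set en : Fin (min m n) → Fin n := Fin.castLE (min_le_right m n) with hen
  have hemInj : Function.Injective em := fun x y hxy =>
    Fin.ext (by simpa [hem] using congrArg Fin.val hxy)
  have henInj : Function.Injective en := fun x y hxy =>
    Fin.ext (by simpa [hen] using congrArg Fin.val hxy)
  have hAentry : ∀ i j, A i j = ∑ k, ρA k * U1 i (em k) * V1 j (en k) := by
    intro i j; rw [hAeq]; exact mir_entry U1 V1 ρA i j
  have hBentry : ∀ i j, B i j = ∑ k, ρB k * U2 i (em k) * V2 j (en k) := by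
    intro i j; rw [hBeq]; exact mir_entry U2 V2 ρB i j
  set W : Fin (min m n) → Fin (min m n) → ℝ := fun k l => ∑ i, U1 i (em k) * U2 i (em l) with hW
  set Z : Fin (min m n) → Fin (min m n) → ℝ := fun k l => ∑ j, V1 j (en k) * V2 j (en l) with hZ
  -- cross term
  have hcross : ∑ i, ∑ j, A i j * B i j
      = ∑ k, ∑ l, ρA k * ρB l * (W k l * Z k l) := by
    calc ∑ i, ∑ j, A i j * B i j
        = ∑ i, ∑ j, (∑ k, (ρA k * U1 i (em k)) * V1 j (en k)) *
            (∑ l, (ρB l * U2 i (em l)) * V2 j (en l)) := by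
          refine Finset.sum_congr rfl fun i _ => Finset.sum_congr rfl fun j _ => ?_
          rw [hAentry, hBentry]
      _ = ∑ k, ∑ l, (∑ i, (ρA k * U1 i (em k)) * (ρB l * U2 i (em l))) *
            (∑ j, V1 j (en k) * V2 j (en l)) :=
          mir_cross_gen _ _ _ _
      _ = ∑ k, ∑ l, ρA k * ρB l * (W k l * Z k l) := by
          refine Finset.sum_congr rfl fun k _ => Finset.sum_congr rfl fun l _ => ?_
          have e0 : ∑ i, (ρA k * U1 i (em k)) * (ρB l * U2 i (em l))
              = ρA k * ρB l * W k l := by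
            rw [hW, Finset.mul_sum]
            exact Finset.sum_congr rfl fun i _ => by ring
          rw [e0, hZ]
          ring
  -- diagonal sums
  have hdiagA : ∑ i, ∑ j, A i j * A i j = ∑ k, ρA k * ρA k := by
    calc ∑ i, ∑ j, A i j * A i j
        = ∑ i, ∑ j, (∑ k, (ρA k * U1 i (em k)) * V1 j (en k)) *
            (∑ l, (ρA l * U1 i (em l)) * V1 j (en l)) := by
          refine Finset.sum_congr rfl fun i _ => Finset.sum_congr rfl fun j _ => ?_
          rw [hAentry]
      _ = ∑ k, ∑ l, (∑ i, (ρA k * U1 i (em k)) * (ρA l * U1 i (em l))) *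
            (∑ j, V1 j (en k) * V1 j (en l)) :=
          mir_cross_gen _ _ _ _
      _ = ∑ k, ∑ l, if l = k then ρA k * ρA l else 0 := by
          refine Finset.sum_congr rfl fun k _ => Finset.sum_congr rfl fun l _ => ?_
          have e1 : ∑ i, (ρA k * U1 i (em k)) * (ρA l * U1 i (em l))
              = ρA k * ρA l * (if k = l then (1:ℝ) else 0) := by
            rw [← mir_diag U1 hU1 em hemInj k l, Finset.mul_sum]
            exact Finset.sum_congr rfl fun i _ => by ring
          rw [e1, mir_diag V1 hV1 en henInj k l]
          by_cases hkl : k = l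
          · subst hkl; simp
          · rw [if_neg hkl, if_neg (fun hc : l = k => hkl hc.symm)]; ring
      _ = ∑ k, ρA k * ρA k := by
          refine Finset.sum_congr rfl fun k _ => ?_
          rw [Finset.sum_ite_eq']
          simp
  have hdiagB : ∑ i, ∑ j, B i j * B i j = ∑ k, ρB k * ρB k := by
    calc ∑ i, ∑ j, B i j * B i j
        = ∑ i, ∑ j, (∑ k, (ρB k * U2 i (em k)) * V2 j (en k)) *
            (∑ l, (ρB l * U2 i (em l)) * V2 j (en l)) := by
          refine Finset.sum_congr rfl fun i _ => Finset.sum_congr rfl fun j _ => ?_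
          rw [hBentry]
      _ = ∑ k, ∑ l, (∑ i, (ρB k * U2 i (em k)) * (ρB l * U2 i (em l))) *
            (∑ j, V2 j (en k) * V2 j (en l)) :=
          mir_cross_gen _ _ _ _
      _ = ∑ k, ∑ l, if l = k then ρB k * ρB l else 0 := by
          refine Finset.sum_congr rfl fun k _ => Finset.sum_congr rfl fun l _ => ?_
          have e1 : ∑ i, (ρB k * U2 i (em k)) * (ρB l * U2 i (em l))
              = ρB k * ρB l * (if k = l then (1:ℝ) else 0) := by
            rw [← mir_diag U2 hU2 em hemInj k l, Finset.mul_sum]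
            exact Finset.sum_congr rfl fun i _ => by ring
          rw [e1, mir_diag V2 hV2 en henInj k l]
          by_cases hkl : k = l
          · subst hkl; simp
          · rw [if_neg hkl, if_neg (fun hc : l = k => hkl hc.symm)]; ring
      _ = ∑ k, ρB k * ρB k := by
          refine Finset.sum_congr rfl fun k _ => ?_
          rw [Finset.sum_ite_eq']
          simp
  -- von Neumann bound
  have hWZle : ∀ k l, W k l * Z k l ≤ (W k l ^ 2 + Z k l ^ 2) / 2 := by
    intro k l; nlinarith [sq_nonneg (W k l - Z k l)]
  have hBesselWrow : ∀ k, ∑ l, (W k l) ^ 2 ≤ 1 := fun k =>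
    mir_bessel U1 U2 hU1 hU2 em hemInj k
  have hBesselWcol : ∀ l, ∑ k, (W k l) ^ 2 ≤ 1 := by
    intro l
    have hb := mir_bessel U2 U1 hU2 hU1 em hemInj l
    calc ∑ k, (W k l) ^ 2
        = ∑ k, (∑ i, U2 i (em l) * U1 i (em k)) ^ 2 := by
          refine Finset.sum_congr rfl fun k _ => ?_
          rw [hW]
          congr 1
          exact Finset.sum_congr rfl fun i _ => by ring
      _ ≤ 1 := hb
  have hBesselZrow : ∀ k, ∑ l, (Z k l) ^ 2 ≤ 1 := fun k =>
    mir_bessel V1 V2 hV1 hV2 en henInj k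
  have hBesselZcol : ∀ l, ∑ k, (Z k l) ^ 2 ≤ 1 := by
    intro l
    have hb := mir_bessel V2 V1 hV2 hV1 en henInj l
    calc ∑ k, (Z k l) ^ 2
        = ∑ k, (∑ j, V2 j (en l) * V1 j (en k)) ^ 2 := by
          refine Finset.sum_congr rfl fun k _ => ?_
          rw [hZ]
          congr 1
          exact Finset.sum_congr rfl fun j _ => by ring
      _ ≤ 1 := hb
  -- extensions to ℕ
  set a : ℕ → ℝ := fun i => if hi : i < min m n then ρA ⟨i, hi⟩ else 0 with ha
  set b : ℕ → ℝ := fun i => if hi : i < min m n then ρB ⟨i, hi⟩ else 0 with hbdef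
  set D : ℕ → ℕ → ℝ := fun k l =>
    if hkl : k < min m n ∧ l < min m n
    then (W ⟨k, hkl.1⟩ ⟨l, hkl.2⟩ ^ 2 + Z ⟨k, hkl.1⟩ ⟨l, hkl.2⟩ ^ 2) / 2
    else 0 with hD
  have ha1 : ∀ s, a (s + 1) ≤ a s := by
    intro s
    by_cases hs : s + 1 < min m n
    · have hs' : s < min m n := Nat.lt_of_succ_lt hs
      simp only [ha, dif_pos hs, dif_pos hs']
      exact hρAm (by simp [Fin.mk_le_mk])
    · by_cases hs' : s < min m n
      · simp only [ha, dif_neg hs, dif_pos hs']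
        exact hρA0 _
      · simp only [ha, dif_neg hs, dif_neg hs']
        exact le_refl 0
  have hb1 : ∀ s, b (s + 1) ≤ b s := by
    intro s
    by_cases hs : s + 1 < min m n
    · have hs' : s < min m n := Nat.lt_of_succ_lt hs
      simp only [hbdef, dif_pos hs, dif_pos hs']
      exact hρBm (by simp [Fin.mk_le_mk])
    · by_cases hs' : s < min m n
      · simp only [hbdef, dif_neg hs, dif_pos hs']
        exact hρB0 _
      · simp only [hbdef, dif_neg hs, dif_neg hs']
        exact le_refl 0
  have ha0 : ∀ s, 0 ≤ a s := by
    intro s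
    by_cases hs : s < min m n
    · simp only [ha, dif_pos hs]; exact hρA0 _
    · simp only [ha, dif_neg hs]; exact le_refl 0
  have hb0 : ∀ s, 0 ≤ b s := by
    intro s
    by_cases hs : s < min m n
    · simp only [hbdef, dif_pos hs]; exact hρB0 _
    · simp only [hbdef, dif_neg hs]; exact le_refl 0
  have haM : a (min m n) = 0 := by simp only [ha]; exact dif_neg (lt_irrefl _)
  have hbM : b (min m n) = 0 := by simp only [hbdef]; exact dif_neg (lt_irrefl _)
  have hD0 : ∀ k l, 0 ≤ D k l := by
    intro k l
    by_cases hkl : k < min m n ∧ l < min m n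
    · simp only [hD, dif_pos hkl]; positivity
    · simp only [hD, dif_neg hkl]; exact le_refl 0
  have hDrow : ∀ k, k < min m n → ∑ l ∈ Finset.range (min m n), D k l ≤ 1 := by
    intro k hk
    have e1 : ∑ l ∈ Finset.range (min m n), D k l = ∑ l : Fin (min m n), D k (l : ℕ) :=
      (Fin.sum_univ_eq_sum_range (fun l => D k l) (min m n)).symm
    rw [e1]
    calc ∑ l : Fin (min m n), D k (l : ℕ)
        = ∑ l : Fin (min m n), (W ⟨k, hk⟩ l ^ 2 + Z ⟨k, hk⟩ l ^ 2) / 2 := by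
          refine Finset.sum_congr rfl fun l _ => ?_
          simp only [hD, dif_pos (And.intro hk l.2)]
      _ = (∑ l, W ⟨k, hk⟩ l ^ 2 + ∑ l, Z ⟨k, hk⟩ l ^ 2) / 2 := by
          rw [← Finset.sum_div, Finset.sum_add_distrib]
      _ ≤ (1 + 1) / 2 := by
          have h1 := hBesselWrow ⟨k, hk⟩
          have h2 := hBesselZrow ⟨k, hk⟩
          linarith
      _ = 1 := by norm_num
  have hDcol : ∀ l, l < min m n → ∑ k ∈ Finset.range (min m n), D k l ≤ 1 := by
    intro l hl
    have e1 : ∑ k ∈ Finset.range (min m n), D k l = ∑ k : Fin (min m n), D (k : ℕ) l :=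
      (Fin.sum_univ_eq_sum_range (fun k => D k l) (min m n)).symm
    rw [e1]
    calc ∑ k : Fin (min m n), D (k : ℕ) l
        = ∑ k : Fin (min m n), (W k ⟨l, hl⟩ ^ 2 + Z k ⟨l, hl⟩ ^ 2) / 2 := by
          refine Finset.sum_congr rfl fun k _ => ?_
          simp only [hD, dif_pos (And.intro k.2 hl)]
      _ = (∑ k, W k ⟨l, hl⟩ ^ 2 + ∑ k, Z k ⟨l, hl⟩ ^ 2) / 2 := by
          rw [← Finset.sum_div, Finset.sum_add_distrib]
      _ ≤ (1 + 1) / 2 := by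
          have h1 := hBesselWcol ⟨l, hl⟩
          have h2 := hBesselZcol ⟨l, hl⟩
          linarith
      _ = 1 := by norm_num
  have hsub := mir_substoch (min m n) a b ha1 ha0 haM hb1 hb0 hbM D hD0 hDrow hDcol
  have etrans1 : ∑ k ∈ Finset.range (min m n), ∑ l ∈ Finset.range (min m n), a k * b l * D k l
      = ∑ k, ∑ l, ρA k * ρB l * ((W k l ^ 2 + Z k l ^ 2) / 2) := by
    rw [← Fin.sum_univ_eq_sum_range
      (fun k => ∑ l ∈ Finset.range (min m n), a k * b l * D k l) (min m n)]
    refine Finset.sum_congr rfl fun k _ => ?_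
    rw [← Fin.sum_univ_eq_sum_range (fun l => a (k : ℕ) * b l * D (k : ℕ) l) (min m n)]
    refine Finset.sum_congr rfl fun l _ => ?_
    simp only [ha, hbdef, hD, dif_pos k.2, dif_pos l.2, dif_pos (And.intro k.2 l.2), Fin.eta]
  have etrans2 : ∑ k ∈ Finset.range (min m n), a k * b k = ∑ k, ρA k * ρB k := by
    rw [← Fin.sum_univ_eq_sum_range (fun k => a k * b k) (min m n)]
    refine Finset.sum_congr rfl fun k _ => ?_
    simp only [ha, hbdef, dif_pos k.2, Fin.eta]
  have hvN : ∑ i, ∑ j, A i j * B i j ≤ ∑ k, ρA k * ρB k := by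
    rw [hcross]
    calc ∑ k, ∑ l, ρA k * ρB l * (W k l * Z k l)
        ≤ ∑ k, ∑ l, ρA k * ρB l * ((W k l ^ 2 + Z k l ^ 2) / 2) := by
          refine Finset.sum_le_sum fun k _ => Finset.sum_le_sum fun l _ => ?_
          exact mul_le_mul_of_nonneg_left (hWZle k l)
            (mul_nonneg (hρA0 k) (hρB0 l))
      _ = ∑ k ∈ Finset.range (min m n), ∑ l ∈ Finset.range (min m n), a k * b l * D k l :=
          etrans1.symm
      _ ≤ ∑ k ∈ Finset.range (min m n), a k * b k := hsub
      _ = ∑ k, ρA k * ρB k := etrans2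
  -- frobenius bound
  have hfr0 : 0 ≤ frob (A - B) := Real.sqrt_nonneg _
  have hsq : frob (A - B) ^ 2 = ∑ i, ∑ j, ((A - B) i j) ^ 2 := by
    rw [frob, Real.sq_sqrt]
    positivity
  have hfr2 : ∑ i, ∑ j, ((A - B) i j) ^ 2 ≤ h ^ 2 := by
    rw [← hsq]
    exact pow_le_pow_left₀ hfr0 hab 2
  have hexpand : ∑ i, ∑ j, ((A - B) i j) ^ 2
      = ∑ i, ∑ j, A i j * A i j - 2 * ∑ i, ∑ j, A i j * B i j
        + ∑ i, ∑ j, B i j * B i j := by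
    rw [Finset.mul_sum, ← Finset.sum_sub_distrib, ← Finset.sum_add_distrib]
    refine Finset.sum_congr rfl fun i _ => ?_
    rw [Finset.mul_sum, ← Finset.sum_sub_distrib, ← Finset.sum_add_distrib]
    refine Finset.sum_congr rfl fun j _ => ?_
    simp only [Matrix.sub_apply]
    ring
  have hgoal : ∑ k, (ρA k - ρB k) ^ 2
      = ∑ k, ρA k * ρA k - 2 * ∑ k, ρA k * ρB k + ∑ k, ρB k * ρB k := by
    rw [Finset.mul_sum, ← Finset.sum_sub_distrib, ← Finset.sum_add_distrib]
    refine Finset.sum_congr rfl fun k _ => ?_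
    ring
  rw [hgoal]
  rw [hexpand, hdiagA, hdiagB] at hfr2
  linarith
end

section
/- Let Ā be a nonzero real m×n matrix and let Ã_h be a real m×n matrix with ‖Ã_h - Ā‖ ≤ h and ‖Ã_h⁺‖ ≤ ‖Ā⁺‖ (Frobenius norms, Moore–Penrose pseudoinverses). If 0 ≤ h < ‖Ā⁺‖^{-1}, then rank(Ã_h) = rank(Ā). -/
open Matrix BigOperators Filter Set

lemma enorm_nonneg {m : ℕ} (v : Fin m → ℝ) : 0 ≤ _root_.enorm v := Real.sqrt_nonneg _

lemma enorm_pos_aux {m : ℕ} {v : Fin m → ℝ} (hv : v ≠ 0) : 0 < _root_.enorm v := by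
  rw [_root_.enorm, Real.sqrt_pos]
  rcases Function.ne_iff.mp hv with ⟨i, hi⟩
  refine Finset.sum_pos' (fun j _ => sq_nonneg _) ⟨i, Finset.mem_univ i, ?_⟩
  exact pow_pos (abs_pos.mpr hi) 2 |>.trans_eq (sq_abs _)

lemma frob_nonneg {m n : ℕ} (A : Matrix (Fin m) (Fin n) ℝ) : 0 ≤ frob A := Real.sqrt_nonneg _

lemma enorm_mulVec_le {m n : ℕ} (M : Matrix (Fin m) (Fin n) ℝ) (x : Fin n → ℝ) :
    _root_.enorm (M.mulVec x) ≤ frob M * _root_.enorm x := by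
  have key : ∑ i, (M.mulVec x i) ^ 2 ≤ (∑ i, ∑ j, (M i j) ^ 2) * (∑ j, (x j) ^ 2) := by
    rw [Finset.sum_mul]
    refine Finset.sum_le_sum fun i _ => ?_
    simpa [Matrix.mulVec, dotProduct] using
      Finset.sum_mul_sq_le_sq_mul_sq Finset.univ (fun j => M i j) x
  calc _root_.enorm (M.mulVec x) ≤ Real.sqrt ((∑ i, ∑ j, (M i j) ^ 2) * (∑ j, (x j) ^ 2)) :=
        Real.sqrt_le_sqrt key
    _ = frob M * _root_.enorm x := Real.sqrt_mul (by positivity) _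

lemma exists_vec {m n : ℕ} (A C : Matrix (Fin m) (Fin n) ℝ) (B : Matrix (Fin n) (Fin m) ℝ)
    (hABA : A * B * A = A) (hBAB : B * A * B = B)
    (hrk : C.rank < A.rank) :
    ∃ x : Fin n → ℝ, x ≠ 0 ∧ C.mulVec x = 0 ∧ (B * A).mulVec x = x := by
  have hPP : (B * A) * (B * A) = B * A := by
    rw [← Matrix.mul_assoc, hBAB]
  have hrank : (B * A).rank = A.rank := by
    refine le_antisymm (Matrix.rank_mul_le_right B A) ?_
    have h2 : A.rank = (A * (B * A)).rank := by rw [← Matrix.mul_assoc, hABA]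
    rw [h2]
    exact Matrix.rank_mul_le_right A (B * A)
  have hfull : Module.finrank ℝ (Fin n → ℝ) = n := Module.finrank_fin_fun ℝ
  have hfp : Module.finrank ℝ (LinearMap.range (B * A).mulVecLin) = A.rank := hrank
  have hrn := LinearMap.finrank_range_add_finrank_ker C.mulVecLin
  rw [hfull] at hrn
  have hCr : Module.finrank ℝ (LinearMap.range C.mulVecLin) = C.rank := rfl
  rw [hCr] at hrn
  set p := LinearMap.range (B * A).mulVecLin with hp
  set q := LinearMap.ker C.mulVecLin with hq
  have hsup : Module.finrank ℝ ↥(p ⊔ q) ≤ n := le_trans (Submodule.finrank_le _) (le_of_eq hfull)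
  have hinf : 0 < Module.finrank ℝ ↥(p ⊓ q) := by
    have h1 := Submodule.finrank_sup_add_finrank_inf_eq p q
    omega
  have hne : p ⊓ q ≠ ⊥ := by
    intro hbot
    rw [hbot, finrank_bot] at hinf
    exact lt_irrefl 0 hinf
  obtain ⟨x, hx, hx0⟩ := Submodule.exists_mem_ne_zero_of_ne_bot hne
  obtain ⟨hxp, hxq⟩ := Submodule.mem_inf.mp hx
  obtain ⟨y, hy⟩ := hxp
  simp only [Matrix.mulVecLin_apply] at hy
  refine ⟨x, hx0, hxq, ?_⟩
  rw [← hy, Matrix.mulVec_mulVec, hPP]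

lemma rank_le_of {m n : ℕ} (A C : Matrix (Fin m) (Fin n) ℝ) (B : Matrix (Fin n) (Fin m) ℝ)
    (hABA : A * B * A = A) (hBAB : B * A * B = B)
    (hsmall : frob (A - C) * frob B < 1) : A.rank ≤ C.rank := by
  by_contra hcon
  push_neg at hcon
  obtain ⟨x, hx0, hCx, hPx⟩ := exists_vec A C B hABA hBAB hcon
  have hAx : A.mulVec x = (A - C).mulVec x := by rw [Matrix.sub_mulVec, hCx, sub_zero]
  have e1 : B.mulVec ((A - C).mulVec x) = x := by rw [← hAx, Matrix.mulVec_mulVec, hPx]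
  have h1 := enorm_mulVec_le B ((A - C).mulVec x)
  have h2 := enorm_mulVec_le (A - C) x
  have hx := enorm_pos_aux hx0
  rw [e1] at h1
  nlinarith [frob_nonneg B, frob_nonneg (A - C), enorm_nonneg ((A - C).mulVec x),
    mul_le_mul_of_nonneg_left h2 (frob_nonneg B)]

lemma frob_sub_comm {m n : ℕ} (A C : Matrix (Fin m) (Fin n) ℝ) :
    frob (A - C) = frob (C - A) := by
  unfold frob
  congr 1
  refine Finset.sum_congr rfl fun i _ => Finset.sum_congr rfl fun j _ => ?_
  have : (A - C) i j = -((C - A) i j) := by simp [Matrix.sub_apply]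
  rw [this, neg_sq]


theorem stmt2 {m n : ℕ} (Abar Ah : Matrix (Fin m) (Fin n) ℝ) (h : ℝ)
    (Bbar Bh : Matrix (Fin n) (Fin m) ℝ)
    (hA : Abar ≠ 0) (hBbar : IsPinv Abar Bbar) (hBh : IsPinv Ah Bh)
    (hdist : frob (Ah - Abar) ≤ h)
    (hnorm : frob Bh ≤ frob Bbar)
    (h0 : 0 ≤ h) (hlt : h < (frob Bbar)⁻¹) :
    Ah.rank = Abar.rank := by
  have hpos : 0 < frob Bbar := inv_pos.mp (lt_of_le_of_lt h0 hlt)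
  have hb1 : h * frob Bbar < 1 := by
    have := mul_lt_mul_of_pos_right hlt hpos
    rwa [inv_mul_cancel₀ (ne_of_gt hpos)] at this
  have hfd : 0 ≤ frob (Ah - Abar) := frob_nonneg _
  refine le_antisymm ?_ ?_
  · refine rank_le_of Ah Abar Bh hBh.1 hBh.2.1 ?_
    calc frob (Ah - Abar) * frob Bh ≤ h * frob Bbar := by
          apply mul_le_mul hdist hnorm (frob_nonneg _) h0
      _ < 1 := hb1
  · refine rank_le_of Abar Ah Bbar hBbar.1 hBbar.2.1 ?_
    calc frob (Abar - Ah) * frob Bbar = frob (Ah - Abar) * frob Bbar := by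
          rw [frob_sub_comm]
      _ ≤ h * frob Bbar := mul_le_mul_of_nonneg_right hdist (le_of_lt hpos)
      _ < 1 := hb1
end

section
/- Let Ā be a nonzero real m×n matrix and suppose (A_j) is a sequence of real m×n matrices with A_j → Ā and ‖A_j⁺‖ ≤ ‖Ā⁺‖ for all j. Then A_j⁺ → Ā⁺. -/
open Matrix BigOperators Filter Set

lemma frob_zero {m n : ℕ} : frob (0 : Matrix (Fin m) (Fin n) ℝ) = 0 := by
  simp [frob]

lemma abs_entry_le_frob {m n : ℕ} (X : Matrix (Fin m) (Fin n) ℝ) (i : Fin m) (j : Fin n) :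
    |X i j| ≤ frob X := by
  rw [frob, ← Real.sqrt_sq_eq_abs]
  apply Real.sqrt_le_sqrt
  calc (X i j) ^ 2 ≤ ∑ k, (X i k) ^ 2 :=
        Finset.single_le_sum (f := fun k => (X i k) ^ 2) (fun k _ => sq_nonneg _)
          (Finset.mem_univ j)
    _ ≤ ∑ l, ∑ k, (X l k) ^ 2 :=
        Finset.single_le_sum (f := fun l => ∑ k, (X l k) ^ 2)
          (fun l _ => Finset.sum_nonneg fun k _ => sq_nonneg _) (Finset.mem_univ i)

lemma frob_continuous {m n : ℕ} : Continuous (frob (m := m) (n := n)) := by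
  apply Real.continuous_sqrt.comp
  apply continuous_finset_sum
  intro i _
  apply continuous_finset_sum
  intro j _
  exact ((continuous_apply_apply i j).pow 2)

lemma frob_tendsto_zero_iff {m n : ℕ} {X : ℕ → Matrix (Fin m) (Fin n) ℝ}
    {Y : Matrix (Fin m) (Fin n) ℝ} :
    Tendsto (fun j => frob (X j - Y)) atTop (nhds 0) ↔ Tendsto X atTop (nhds Y) := by
  constructor
  · intro h
    refine tendsto_pi_nhds.2 ?_
    intro i
    rw [tendsto_pi_nhds]
    intro k
    rw [← tendsto_sub_nhds_zero_iff]
    apply squeeze_zero_norm (fun j => ?_) h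
    simpa using abs_entry_le_frob (X j - Y) i k
  · intro h
    have h2 : Tendsto (fun j => X j - Y) atTop (nhds 0) := by
      simpa using h.sub (tendsto_const_nhds (x := Y))
    have := (frob_continuous.tendsto 0).comp h2
    simpa [frob_zero, Function.comp_def] using this

lemma pinv_unique {m n : ℕ} {A : Matrix (Fin m) (Fin n) ℝ} {B C : Matrix (Fin n) (Fin m) ℝ}
    (hB : IsPinv A B) (hC : IsPinv A C) : B = C := by
  obtain ⟨hb1, hb2, hb3, hb4⟩ := hB
  obtain ⟨hc1, hc2, hc3, hc4⟩ := hC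
  have k1 : (A * B) * (A * C) = A * C := by
    rw [← Matrix.mul_assoc (A * B) A C, hb1]
  have hab : A * B = A * C := by
    calc A * B = (A * C) * (A * B) := by
          rw [← Matrix.mul_assoc (A * C) A B, hc1]
      _ = (A * C)ᵀ * (A * B)ᵀ := by rw [hc3, hb3]
      _ = ((A * B) * (A * C))ᵀ := by rw [← Matrix.transpose_mul]
      _ = (A * C)ᵀ := by rw [k1]
      _ = A * C := hc3
  have k2 : (C * A) * (B * A) = C * A := by
    rw [Matrix.mul_assoc C A (B * A), ← Matrix.mul_assoc A B A, hb1]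
  have hba : B * A = C * A := by
    calc B * A = (B * A) * (C * A) := by
          rw [Matrix.mul_assoc B A (C * A), ← Matrix.mul_assoc A C A, hc1]
      _ = (B * A)ᵀ * (C * A)ᵀ := by rw [hb4, hc4]
      _ = ((C * A) * (B * A))ᵀ := by rw [← Matrix.transpose_mul]
      _ = (C * A)ᵀ := by rw [k2]
      _ = C * A := hc4
  calc B = B * A * B := hb2.symm
    _ = (C * A) * B := by rw [hba]
    _ = C * (A * B) := Matrix.mul_assoc C A B
    _ = C * (A * C) := by rw [hab]
    _ = C * A * C := (Matrix.mul_assoc C A C).symm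
    _ = C := hc2

theorem stmt5 {m n : ℕ} (Abar : Matrix (Fin m) (Fin n) ℝ) (Bbar : Matrix (Fin n) (Fin m) ℝ)
    (A : ℕ → Matrix (Fin m) (Fin n) ℝ) (B : ℕ → Matrix (Fin n) (Fin m) ℝ)
    (hA : Abar ≠ 0) (hBbar : IsPinv Abar Bbar) (hB : ∀ j, IsPinv (A j) (B j))
    (hconv : Tendsto (fun j => frob (A j - Abar)) atTop (nhds 0))
    (hbd : ∀ j, frob (B j) ≤ frob Bbar) :
    Tendsto (fun j => frob (B j - Bbar)) atTop (nhds 0) := by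
  rw [frob_tendsto_zero_iff]
  rw [frob_tendsto_zero_iff] at hconv
  apply tendsto_of_subseq_tendsto
  intro ns hns
  -- compact set containing all B j
  set c := frob Bbar with hc
  have hK : IsCompact (univ.pi fun _ : Fin n => univ.pi fun _ : Fin m => Icc (-c) c) := by
    apply isCompact_univ_pi
    intro i
    exact isCompact_univ_pi fun j => isCompact_Icc
  have hmem : ∀ j, B j ∈ (univ.pi fun _ : Fin n => univ.pi fun _ : Fin m => Icc (-c) c) := by
    intro j
    intro i _
    intro k _
    have := abs_entry_le_frob (B j) i k
    have := this.trans (hbd j)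
    exact abs_le.mp this
  obtain ⟨x0, hxK, φ, hφ, hxlim0⟩ := hK.tendsto_subseq (fun k => hmem (ns k))
  set x : Matrix (Fin n) (Fin m) ℝ := Matrix.of x0 with hxdef
  have hxlim : Tendsto (fun k => B (ns (φ k))) atTop (nhds x) := hxlim0
  refine ⟨φ, ?_⟩
  have hAlim : Tendsto (fun k => A (ns (φ k))) atTop (nhds Abar) :=
    hconv.comp (hns.comp hφ.tendsto_atTop)
  have hBlim : Tendsto (fun k => B (ns (φ k))) atTop (nhds x) := hxlim
  -- show x is a pseudoinverse of Abar
  have hmul : ∀ {p q r : ℕ} {P : ℕ → Matrix (Fin p) (Fin q) ℝ} {Q : ℕ → Matrix (Fin q) (Fin r) ℝ}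
      {Pl Ql}, Tendsto P atTop (nhds Pl) → Tendsto Q atTop (nhds Ql) →
      Tendsto (fun k => P k * Q k) atTop (nhds (Pl * Ql)) := by
    intro p q r P Q Pl Ql hP hQ
    replace hP := tendsto_pi_nhds.1 hP
    replace hQ := tendsto_pi_nhds.1 hQ
    refine tendsto_pi_nhds.2 ?_
    intro i
    rw [tendsto_pi_nhds]
    intro j
    have hP' : ∀ i l, Tendsto (fun k => P k i l) atTop (nhds (Pl i l)) := by
      intro i l
      have := hP i
      rw [tendsto_pi_nhds] at this
      exact this l
    have hQ' : ∀ l j, Tendsto (fun k => Q k l j) atTop (nhds (Ql l j)) := by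
      intro l j
      have := hQ l
      rw [tendsto_pi_nhds] at this
      exact this j
    have : Tendsto (fun k => ∑ l, P k i l * Q k l j) atTop (nhds (∑ l, Pl i l * Ql l j)) :=
      tendsto_finset_sum _ fun l _ => (hP' i l).mul (hQ' l j)
    simpa [Matrix.mul_apply] using this
  have htrans : ∀ {p q : ℕ} {P : ℕ → Matrix (Fin p) (Fin q) ℝ} {Pl},
      Tendsto P atTop (nhds Pl) → Tendsto (fun k => (P k)ᵀ) atTop (nhds Plᵀ) := by
    intro p q P Pl hP
    replace hP := tendsto_pi_nhds.1 hP
    refine tendsto_pi_nhds.2 ?_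
    intro j
    rw [tendsto_pi_nhds]
    intro i
    have := hP i
    rw [tendsto_pi_nhds] at this
    exact this j
  have hx : IsPinv Abar x := by
    have t1 : Tendsto (fun k => A (ns (φ k)) * B (ns (φ k)) * A (ns (φ k))) atTop
        (nhds (Abar * x * Abar)) := hmul (hmul hAlim hBlim) hAlim
    have e1 : (fun k => A (ns (φ k)) * B (ns (φ k)) * A (ns (φ k))) = fun k => A (ns (φ k)) :=
      funext fun k => (hB (ns (φ k))).1
    have t2 : Tendsto (fun k => B (ns (φ k)) * A (ns (φ k)) * B (ns (φ k))) atTop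
        (nhds (x * Abar * x)) := hmul (hmul hBlim hAlim) hBlim
    have e2 : (fun k => B (ns (φ k)) * A (ns (φ k)) * B (ns (φ k))) = fun k => B (ns (φ k)) :=
      funext fun k => (hB (ns (φ k))).2.1
    have t3 : Tendsto (fun k => (A (ns (φ k)) * B (ns (φ k)))ᵀ) atTop
        (nhds (Abar * x)ᵀ) := htrans (hmul hAlim hBlim)
    have e3 : (fun k => (A (ns (φ k)) * B (ns (φ k)))ᵀ)
        = fun k => A (ns (φ k)) * B (ns (φ k)) := funext fun k => (hB (ns (φ k))).2.2.1
    have t4 : Tendsto (fun k => (B (ns (φ k)) * A (ns (φ k)))ᵀ) atTop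
        (nhds (x * Abar)ᵀ) := htrans (hmul hBlim hAlim)
    have e4 : (fun k => (B (ns (φ k)) * A (ns (φ k)))ᵀ)
        = fun k => B (ns (φ k)) * A (ns (φ k)) := funext fun k => (hB (ns (φ k))).2.2.2
    refine ⟨?_, ?_, ?_, ?_⟩
    · exact tendsto_nhds_unique t1 (e1 ▸ hAlim)
    · exact tendsto_nhds_unique t2 (e2 ▸ hBlim)
    · exact tendsto_nhds_unique t3 (e3 ▸ hmul hAlim hBlim)
    · exact tendsto_nhds_unique t4 (e4 ▸ hmul hBlim hAlim)
  have : x = Bbar := pinv_unique hx hBbar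
  rw [← this]
  exact hxlim
end

section
/- Let Ā be a nonzero real m×n matrix and ū a vector in ℝ^m. Suppose (δ_j) → 0, (u_j) is a sequence in ℝ^m with ‖u_j - ū‖ ≤ δ_j, and (A_j) is a sequence of m×n matrices with A_j → Ā and ‖A_j⁺‖ ≤ ‖Ā⁺‖. Then A_j⁺ u_j converges to the normal pseudosolution z̄ = Ā⁺ ū. -/
open Matrix BigOperators Filter Set

noncomputable def vecEnorm {m : ℕ} (v : Fin m → ℝ) : ℝ :=
  Real.sqrt (∑ i, (v i) ^ 2)

attribute [local instance] Matrix.frobeniusSeminormedAddCommGroup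

lemma frob_eq_norm {m n : ℕ} (A : Matrix (Fin m) (Fin n) ℝ) : frob A = ‖A‖ := by
  rw [Matrix.frobenius_norm_def, frob, ← Real.sqrt_eq_rpow]
  congr 1
  refine Finset.sum_congr rfl fun i _ => Finset.sum_congr rfl fun j _ => ?_
  rw [Real.norm_eq_abs, Real.rpow_two, sq_abs]

lemma vecEnorm_eq_norm {m : ℕ} (v : Fin m → ℝ) :
    vecEnorm v = ‖(WithLp.equiv 2 (Fin m → ℝ)).symm v‖ := by
  rw [EuclideanSpace.norm_eq, vecEnorm]
  congr 1
  refine Finset.sum_congr rfl fun i _ => ?_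
  rw [Real.norm_eq_abs, sq_abs]; rfl

lemma vecEnorm_mulVec_le {m n : ℕ} (A : Matrix (Fin m) (Fin n) ℝ) (v : Fin n → ℝ) :
    vecEnorm (A.mulVec v) ≤ frob A * vecEnorm v := by
  rw [frob_eq_norm, vecEnorm_eq_norm, vecEnorm_eq_norm]
  have h := Matrix.frobenius_norm_mul A (Matrix.replicateCol Unit v)
  rw [← Matrix.replicateCol_mulVec, Matrix.frobenius_norm_replicateCol, Matrix.frobenius_norm_replicateCol] at h
  exact h

lemma pinv_identity {m n : ℕ} (A₁ A₂ : Matrix (Fin m) (Fin n) ℝ) (B₁ B₂ : Matrix (Fin n) (Fin m) ℝ)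
    (h₁ : IsPinv A₁ B₁) (h₂ : IsPinv A₂ B₂) :
    B₁ - B₂ = -(B₁ * (A₁ - A₂) * B₂) + B₁ * B₁ᵀ * (A₁ - A₂)ᵀ * (1 - A₂ * B₂)
      + (1 - B₁ * A₁) * (A₁ - A₂)ᵀ * (B₂ᵀ * B₂) := by
  obtain ⟨e1, e2, e3, e4⟩ := h₁
  obtain ⟨f1, f2, f3, f4⟩ := h₂
  have h1 : B₁ * (B₁ᵀ * A₁ᵀ) = B₁ := by
    calc B₁ * (B₁ᵀ * A₁ᵀ) = B₁ * (A₁ * B₁)ᵀ := by rw [Matrix.transpose_mul]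
    _ = B₁ * (A₁ * B₁) := by rw [e3]
    _ = B₁ := by rw [← Matrix.mul_assoc, e2]
  have h1' : ∀ X : Matrix (Fin m) (Fin m) ℝ, B₁ * (B₁ᵀ * (A₁ᵀ * X)) = B₁ * X := by
    intro X
    rw [← Matrix.mul_assoc, ← Matrix.mul_assoc, Matrix.mul_assoc B₁ B₁ᵀ A₁ᵀ, h1]
  have h2 : A₂ᵀ * (A₂ * B₂) = A₂ᵀ := by
    calc A₂ᵀ * (A₂ * B₂) = A₂ᵀ * (A₂ * B₂)ᵀ := by rw [f3]
    _ = (A₂ * B₂ * A₂)ᵀ := (Matrix.transpose_mul _ _).symm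
    _ = A₂ᵀ := by rw [f1]
  have h3 : B₁ * (A₁ * A₁ᵀ) = A₁ᵀ := by
    calc B₁ * (A₁ * A₁ᵀ) = B₁ * A₁ * A₁ᵀ := by rw [Matrix.mul_assoc]
    _ = (B₁ * A₁)ᵀ * A₁ᵀ := by rw [e4]
    _ = (A₁ * (B₁ * A₁))ᵀ := (Matrix.transpose_mul _ _).symm
    _ = A₁ᵀ := by rw [← Matrix.mul_assoc, e1]
  have h3' : ∀ X : Matrix (Fin m) (Fin m) ℝ, B₁ * (A₁ * (A₁ᵀ * X)) = A₁ᵀ * X := by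
    intro X
    rw [← Matrix.mul_assoc, ← Matrix.mul_assoc, Matrix.mul_assoc B₁ A₁ A₁ᵀ, h3]
  have h4 : A₂ᵀ * (B₂ᵀ * B₂) = B₂ := by
    calc A₂ᵀ * (B₂ᵀ * B₂) = A₂ᵀ * B₂ᵀ * B₂ := by rw [Matrix.mul_assoc]
    _ = (B₂ * A₂)ᵀ * B₂ := by rw [Matrix.transpose_mul]
    _ = B₂ * A₂ * B₂ := by rw [f4]
    _ = B₂ := f2
  simp only [Matrix.transpose_sub, Matrix.mul_sub, Matrix.sub_mul, Matrix.mul_one,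
    Matrix.one_mul, Matrix.mul_assoc]
  rw [h4, h2, h1, h1' (A₂ * B₂), h3' (B₂ᵀ * B₂)]
  abel

lemma vecEnorm_nonneg' {m : ℕ} (v : Fin m → ℝ) : 0 ≤ vecEnorm v := Real.sqrt_nonneg _

lemma vecEnorm_add_le {m : ℕ} (x y : Fin m → ℝ) : vecEnorm (x + y) ≤ vecEnorm x + vecEnorm y := by
  simp only [vecEnorm_eq_norm]
  rw [show (WithLp.equiv 2 (Fin m → ℝ)).symm (x + y)
      = (WithLp.equiv 2 (Fin m → ℝ)).symm x + (WithLp.equiv 2 (Fin m → ℝ)).symm y from rfl]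
  exact norm_add_le _ _

theorem stmt6 {m n : ℕ} (Abar : Matrix (Fin m) (Fin n) ℝ) (Bbar : Matrix (Fin n) (Fin m) ℝ)
    (ubar : Fin m → ℝ)
    (A : ℕ → Matrix (Fin m) (Fin n) ℝ) (B : ℕ → Matrix (Fin n) (Fin m) ℝ)
    (u : ℕ → (Fin m → ℝ)) (δ : ℕ → ℝ)
    (hA : Abar ≠ 0) (hBbar : IsPinv Abar Bbar) (hB : ∀ j, IsPinv (A j) (B j))
    (hδ : Tendsto δ atTop (nhds 0))
    (hu : ∀ j, vecEnorm (u j - ubar) ≤ δ j)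
    (hconv : Tendsto (fun j => frob (A j - Abar)) atTop (nhds 0))
    (hbd : ∀ j, frob (B j) ≤ frob Bbar) :
    Tendsto (fun j => vecEnorm ((B j).mulVec (u j) - Bbar.mulVec ubar)) atTop (nhds 0) := by
  have hfb : ∀ j, ‖B j‖ ≤ ‖Bbar‖ := by
    intro j; simpa [frob_eq_norm] using hbd j
  have hg : Tendsto (fun j => ‖A j - Abar‖) atTop (nhds 0) := by
    have heq : (fun j => frob (A j - Abar)) = fun j => ‖A j - Abar‖ := by
      funext j; exact frob_eq_norm _
    rwa [heq] at hconv
  have key : ∀ j, ‖B j - Bbar‖ ≤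
      ‖Bbar‖ * ‖A j - Abar‖ * ‖Bbar‖
        + ‖Bbar‖ * ‖Bbar‖ * ‖A j - Abar‖ * ‖(1 : Matrix (Fin m) (Fin m) ℝ) - Abar * Bbar‖
        + (‖(1 : Matrix (Fin n) (Fin n) ℝ)‖ + ‖Bbar‖ * (‖Abar‖ + ‖A j - Abar‖))
            * ‖A j - Abar‖ * (‖Bbar‖ * ‖Bbar‖) := by
    intro j
    have hid := pinv_identity (A j) Abar (B j) Bbar (hB j) hBbar
    have nE : (0:ℝ) ≤ ‖A j - Abar‖ := norm_nonneg _
    have nc : (0:ℝ) ≤ ‖Bbar‖ := norm_nonneg _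
    have t1 : ‖B j * (A j - Abar) * Bbar‖ ≤ ‖Bbar‖ * ‖A j - Abar‖ * ‖Bbar‖ := by
      calc ‖B j * (A j - Abar) * Bbar‖
          ≤ ‖B j * (A j - Abar)‖ * ‖Bbar‖ := Matrix.frobenius_norm_mul _ _
        _ ≤ (‖B j‖ * ‖A j - Abar‖) * ‖Bbar‖ :=
            mul_le_mul_of_nonneg_right (Matrix.frobenius_norm_mul _ _) nc
        _ ≤ (‖Bbar‖ * ‖A j - Abar‖) * ‖Bbar‖ :=
            mul_le_mul_of_nonneg_right (mul_le_mul_of_nonneg_right (hfb j) nE) nc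
    have t2 : ‖B j * (B j)ᵀ * (A j - Abar)ᵀ * (1 - Abar * Bbar)‖
        ≤ ‖Bbar‖ * ‖Bbar‖ * ‖A j - Abar‖ * ‖(1 : Matrix (Fin m) (Fin m) ℝ) - Abar * Bbar‖ := by
      have no1 : (0:ℝ) ≤ ‖(1 : Matrix (Fin m) (Fin m) ℝ) - Abar * Bbar‖ := norm_nonneg _
      have step : ‖B j * (B j)ᵀ * (A j - Abar)ᵀ‖ ≤ ‖Bbar‖ * ‖Bbar‖ * ‖A j - Abar‖ := by
        calc ‖B j * (B j)ᵀ * (A j - Abar)ᵀ‖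
            ≤ ‖B j * (B j)ᵀ‖ * ‖(A j - Abar)ᵀ‖ := Matrix.frobenius_norm_mul _ _
          _ = ‖B j * (B j)ᵀ‖ * ‖A j - Abar‖ := by rw [Matrix.frobenius_norm_transpose]
          _ ≤ (‖B j‖ * ‖(B j)ᵀ‖) * ‖A j - Abar‖ :=
              mul_le_mul_of_nonneg_right (Matrix.frobenius_norm_mul _ _) nE
          _ = (‖B j‖ * ‖B j‖) * ‖A j - Abar‖ := by rw [Matrix.frobenius_norm_transpose]
          _ ≤ (‖Bbar‖ * ‖Bbar‖) * ‖A j - Abar‖ :=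
              mul_le_mul_of_nonneg_right
                (mul_le_mul (hfb j) (hfb j) (norm_nonneg _) nc) nE
      calc ‖B j * (B j)ᵀ * (A j - Abar)ᵀ * (1 - Abar * Bbar)‖
          ≤ ‖B j * (B j)ᵀ * (A j - Abar)ᵀ‖ * ‖(1 : Matrix (Fin m) (Fin m) ℝ) - Abar * Bbar‖ :=
            Matrix.frobenius_norm_mul _ _
        _ ≤ ‖Bbar‖ * ‖Bbar‖ * ‖A j - Abar‖ * ‖(1 : Matrix (Fin m) (Fin m) ℝ) - Abar * Bbar‖ :=
            mul_le_mul_of_nonneg_right step no1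
    have t3 : ‖(1 - B j * A j) * (A j - Abar)ᵀ * (Bbarᵀ * Bbar)‖
        ≤ (‖(1 : Matrix (Fin n) (Fin n) ℝ)‖ + ‖Bbar‖ * (‖Abar‖ + ‖A j - Abar‖))
            * ‖A j - Abar‖ * (‖Bbar‖ * ‖Bbar‖) := by
      have m4 : ‖(1 : Matrix (Fin n) (Fin n) ℝ) - B j * A j‖
          ≤ ‖(1 : Matrix (Fin n) (Fin n) ℝ)‖ + ‖Bbar‖ * (‖Abar‖ + ‖A j - Abar‖) := by
        have s1 : ‖(1 : Matrix (Fin n) (Fin n) ℝ) - B j * A j‖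
            ≤ ‖(1 : Matrix (Fin n) (Fin n) ℝ)‖ + ‖B j * A j‖ := norm_sub_le _ _
        have s2 := Matrix.frobenius_norm_mul (B j) (A j)
        have s3 : ‖A j‖ ≤ ‖Abar‖ + ‖A j - Abar‖ := by
          have h5 : A j = Abar + (A j - Abar) := by abel
          calc ‖A j‖ = ‖Abar + (A j - Abar)‖ := by rw [← h5]
            _ ≤ ‖Abar‖ + ‖A j - Abar‖ := norm_add_le _ _
        have s4 : ‖B j‖ * ‖A j‖ ≤ ‖Bbar‖ * (‖Abar‖ + ‖A j - Abar‖) :=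
          mul_le_mul (hfb j) s3 (norm_nonneg _) nc
        linarith
      have nBB : (0:ℝ) ≤ ‖Bbarᵀ * Bbar‖ := norm_nonneg _
      have mBB : ‖Bbarᵀ * Bbar‖ ≤ ‖Bbar‖ * ‖Bbar‖ := by
        have := Matrix.frobenius_norm_mul Bbarᵀ Bbar
        rwa [Matrix.frobenius_norm_transpose] at this
      have step : ‖(1 - B j * A j) * (A j - Abar)ᵀ‖
          ≤ (‖(1 : Matrix (Fin n) (Fin n) ℝ)‖ + ‖Bbar‖ * (‖Abar‖ + ‖A j - Abar‖))
              * ‖A j - Abar‖ := by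
        calc ‖(1 - B j * A j) * (A j - Abar)ᵀ‖
            ≤ ‖(1 : Matrix (Fin n) (Fin n) ℝ) - B j * A j‖ * ‖(A j - Abar)ᵀ‖ :=
              Matrix.frobenius_norm_mul _ _
          _ = ‖(1 : Matrix (Fin n) (Fin n) ℝ) - B j * A j‖ * ‖A j - Abar‖ := by
              rw [Matrix.frobenius_norm_transpose]
          _ ≤ (‖(1 : Matrix (Fin n) (Fin n) ℝ)‖ + ‖Bbar‖ * (‖Abar‖ + ‖A j - Abar‖))
              * ‖A j - Abar‖ := mul_le_mul_of_nonneg_right m4 nE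
      calc ‖(1 - B j * A j) * (A j - Abar)ᵀ * (Bbarᵀ * Bbar)‖
          ≤ ‖(1 - B j * A j) * (A j - Abar)ᵀ‖ * ‖Bbarᵀ * Bbar‖ :=
            Matrix.frobenius_norm_mul _ _
        _ ≤ ((‖(1 : Matrix (Fin n) (Fin n) ℝ)‖ + ‖Bbar‖ * (‖Abar‖ + ‖A j - Abar‖))
              * ‖A j - Abar‖) * (‖Bbar‖ * ‖Bbar‖) :=
            mul_le_mul step mBB nBB (by positivity)
    calc ‖B j - Bbar‖
        = ‖-(B j * (A j - Abar) * Bbar) + B j * (B j)ᵀ * (A j - Abar)ᵀ * (1 - Abar * Bbar)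
            + (1 - B j * A j) * (A j - Abar)ᵀ * (Bbarᵀ * Bbar)‖ := by rw [← hid]
      _ ≤ ‖-(B j * (A j - Abar) * Bbar)‖
            + ‖B j * (B j)ᵀ * (A j - Abar)ᵀ * (1 - Abar * Bbar)‖
            + ‖(1 - B j * A j) * (A j - Abar)ᵀ * (Bbarᵀ * Bbar)‖ := norm_add₃_le
      _ = ‖B j * (A j - Abar) * Bbar‖
            + ‖B j * (B j)ᵀ * (A j - Abar)ᵀ * (1 - Abar * Bbar)‖
            + ‖(1 - B j * A j) * (A j - Abar)ᵀ * (Bbarᵀ * Bbar)‖ := by rw [norm_neg]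
      _ ≤ _ := add_le_add (add_le_add t1 t2) t3
  have hFlim : Tendsto (fun j =>
      ‖Bbar‖ * ‖A j - Abar‖ * ‖Bbar‖
        + ‖Bbar‖ * ‖Bbar‖ * ‖A j - Abar‖ * ‖(1 : Matrix (Fin m) (Fin m) ℝ) - Abar * Bbar‖
        + (‖(1 : Matrix (Fin n) (Fin n) ℝ)‖ + ‖Bbar‖ * (‖Abar‖ + ‖A j - Abar‖))
            * ‖A j - Abar‖ * (‖Bbar‖ * ‖Bbar‖)) atTop (nhds 0) := by
    have h1 := (hg.const_mul ‖Bbar‖).mul_const ‖Bbar‖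
    have h2 := ((hg.const_mul (‖Bbar‖ * ‖Bbar‖)).mul_const
      ‖(1 : Matrix (Fin m) (Fin m) ℝ) - Abar * Bbar‖)
    have h3 := ((((hg.const_add ‖Abar‖).const_mul ‖Bbar‖).const_add
      ‖(1 : Matrix (Fin n) (Fin n) ℝ)‖).mul hg).mul_const (‖Bbar‖ * ‖Bbar‖)
    have := (h1.add h2).add h3
    simpa using this
  have hBconv : Tendsto (fun j => ‖B j - Bbar‖) atTop (nhds 0) :=
    squeeze_zero (fun j => norm_nonneg _) key hFlim
  have hδ0 : ∀ j, 0 ≤ δ j := fun j => le_trans (vecEnorm_nonneg' _) (hu j)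
  have bound : ∀ j, vecEnorm ((B j).mulVec (u j) - Bbar.mulVec ubar)
      ≤ ‖Bbar‖ * δ j + ‖B j - Bbar‖ * vecEnorm ubar := by
    intro j
    have hsplit : (B j).mulVec (u j) - Bbar.mulVec ubar
        = (B j).mulVec (u j - ubar) + (B j - Bbar).mulVec ubar := by
      rw [Matrix.mulVec_sub, Matrix.sub_mulVec]; abel
    have h1 := vecEnorm_add_le ((B j).mulVec (u j - ubar)) ((B j - Bbar).mulVec ubar)
    have h2 := vecEnorm_mulVec_le (B j) (u j - ubar)
    have h3 := vecEnorm_mulVec_le (B j - Bbar) ubar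
    rw [frob_eq_norm] at h2 h3
    have h4 : ‖B j‖ * vecEnorm (u j - ubar) ≤ ‖Bbar‖ * δ j :=
      mul_le_mul (hfb j) (hu j) (vecEnorm_nonneg' _) (norm_nonneg _)
    rw [hsplit]
    linarith
  have hRlim : Tendsto (fun j => ‖Bbar‖ * δ j + ‖B j - Bbar‖ * vecEnorm ubar) atTop (nhds 0) := by
    have := (hδ.const_mul ‖Bbar‖).add (hBconv.mul_const (vecEnorm ubar))
    simpa using this
  exact squeeze_zero (fun j => vecEnorm_nonneg' _) bound hRlim
end

section
/- Let r̄ ≥ 1, ρ̄_1 ≥ ... ≥ ρ̄_{r̄} > 0, and suppose x_k(h) = 1 + a_k h + o(h) as h → 0⁺ with real constants a_1 < a_2 < ... < a_{r̄}. Let h(δ) > 0 with h(δ) → 0 as δ → 0, and let r(δ) ≤ r̄ denote an index with x_{r(δ)}(h(δ)) > 0. Then for all sufficiently small δ, the ratio ν(δ) = (ρ̄_1 x_1(h(δ)))/(ρ̄_{r(δ)} x_{r(δ)}(h(δ))) satisfies ν(δ) < ρ̄_1/ρ̄_{r(δ)} ≤ ρ̄_1/ρ̄_{r̄} whenever r(δ)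 > 1. -/
open Matrix BigOperators Filter Set

theorem stmt18 (rbar : ℕ) (hr : 1 ≤ rbar)
    (ρ : Fin rbar → ℝ) (hmon : Antitone ρ) (hpos : ∀ k, 0 < ρ k)
    (a : Fin rbar → ℝ) (ha : StrictMono a)
    (x : Fin rbar → ℝ → ℝ)
    (hx : ∀ k, Tendsto (fun h => (x k h - 1) / h) (nhdsWithin 0 (Set.Ioi 0)) (nhds (a k)))
    (hfun : ℝ → ℝ) (hpos' : ∀ δ : ℝ, 0 < δ → 0 < hfun δ)
    (hconv : Tendsto hfun (nhdsWithin 0 (Set.Ioi 0)) (nhds 0))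
    (rfun : ℝ → Fin rbar)
    (hxpos : ∀ δ : ℝ, 0 < δ → 0 < x (rfun δ) (hfun δ)) :
    ∃ δ0 : ℝ, 0 < δ0 ∧ ∀ δ : ℝ, 0 < δ → δ < δ0 → (0 : ℕ) < (rfun δ : ℕ) →
      (ρ ⟨0, by omega⟩ * x ⟨0, by omega⟩ (hfun δ)) / (ρ (rfun δ) * x (rfun δ) (hfun δ))
          < ρ ⟨0, by omega⟩ / ρ (rfun δ) ∧
        ρ ⟨0, by omega⟩ / ρ (rfun δ) ≤ ρ ⟨0, by omega⟩ / ρ ⟨rbar - 1, by omega⟩ := by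
  classical
  have hzero : 0 < rbar := hr
  have key : ∀ᶠ h in nhdsWithin (0:ℝ) (Set.Ioi 0),
      ∀ k : Fin rbar, 0 < (k:ℕ) → x ⟨0, hzero⟩ h < x k h := by
    rw [eventually_all]
    intro k
    by_cases hk : 0 < (k:ℕ)
    · have hak : a ⟨0, hzero⟩ < a k := ha (by simpa [Fin.lt_def] using hk)
      have hdiff : Tendsto (fun h => (x ⟨0, hzero⟩ h - 1)/h - (x k h - 1)/h)
          (nhdsWithin (0:ℝ) (Set.Ioi 0)) (nhds (a ⟨0, hzero⟩ - a k)) := (hx _).sub (hx k)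
      have hev : ∀ᶠ h in nhdsWithin (0:ℝ) (Set.Ioi 0),
          (x ⟨0, hzero⟩ h - 1)/h - (x k h - 1)/h < 0 :=
        hdiff.eventually_lt_const (by linarith)
      filter_upwards [hev, self_mem_nhdsWithin] with h h1 h2 _
      rw [div_sub_div_same] at h1
      have h2' : (0:ℝ) < h := h2
      rcases div_neg_iff.mp h1 with ⟨_, hb⟩ | ⟨ha', _⟩
      · linarith
      · linarith
    · exact Filter.Eventually.of_forall (fun h hp => absurd hp hk)
  have htend : Tendsto hfun (nhdsWithin (0:ℝ) (Set.Ioi 0)) (nhdsWithin (0:ℝ) (Set.Ioi 0)) := by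
    rw [tendsto_nhdsWithin_iff]
    refine ⟨hconv, ?_⟩
    filter_upwards [self_mem_nhdsWithin] with δ hδ
    exact hpos' δ hδ
  have hev2 := htend.eventually key
  rw [eventually_nhdsWithin_iff, Metric.eventually_nhds_iff] at hev2
  obtain ⟨ε, hε, hball⟩ := hev2
  refine ⟨ε, hε, ?_⟩
  intro δ hδ hδε hk
  have hP := hball (y := δ) (by rw [Real.dist_eq, sub_zero, abs_of_pos hδ]; exact hδε) hδ
  have hx0 : x ⟨0, hzero⟩ (hfun δ) < x (rfun δ) (hfun δ) := hP (rfun δ) hk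
  have hxk : 0 < x (rfun δ) (hfun δ) := hxpos δ hδ
  have hρ0 : 0 < ρ ⟨0, hzero⟩ := hpos _
  have hρk : 0 < ρ (rfun δ) := hpos _
  have hρl : 0 < ρ ⟨rbar - 1, by omega⟩ := hpos _
  constructor
  · rw [div_lt_div_iff₀ (by positivity) hρk]
    nlinarith [mul_lt_mul_of_pos_left hx0 (mul_pos hρ0 hρk)]
  · have hle : ρ ⟨rbar - 1, by omega⟩ ≤ ρ (rfun δ) := by
      apply hmon
      have := (rfun δ).isLt
      simp [Fin.le_def]; omega
    gcongr
end

section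
/- Let ρ_1 > ρ_2 > 0 and for k = 1, 2 define x_k(h) ∈ [1, 3/2] as the solution of x⁴ - x³ = h·ρ_k^{-4} for 0 ≤ h ≤ (27/16)ρ_k⁴. Then for all h with 0 < h ≤ (27/16)ρ_2⁴ one has x_1(h) < x_2(h), and consequently (ρ_1 x_1(h))/(ρ_2 x_2(h)) < ρ_1/ρ_2. -/
open Matrix BigOperators Filter Set

theorem stmt19 (ρ1 ρ2 : ℝ) (hρ2 : 0 < ρ2) (hρ : ρ2 < ρ1)
    (x1 x2 : ℝ → ℝ)
    (hx1 : ∀ h ∈ Set.Icc (0 : ℝ) (27 / 16 * ρ1 ^ 4),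
      x1 h ∈ Set.Icc (1 : ℝ) (3 / 2) ∧ (x1 h) ^ 4 - (x1 h) ^ 3 = h / ρ1 ^ 4)
    (hx2 : ∀ h ∈ Set.Icc (0 : ℝ) (27 / 16 * ρ2 ^ 4),
      x2 h ∈ Set.Icc (1 : ℝ) (3 / 2) ∧ (x2 h) ^ 4 - (x2 h) ^ 3 = h / ρ2 ^ 4) :
    ∀ h : ℝ, 0 < h → h ≤ 27 / 16 * ρ2 ^ 4 →
      x1 h < x2 h ∧ (ρ1 * x1 h) / (ρ2 * x2 h) < ρ1 / ρ2 := by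
  intro h hpos hle
  have hρ1 : (0:ℝ) < ρ1 := hρ2.trans hρ
  have hρ4 : ρ2 ^ 4 < ρ1 ^ 4 := by
    apply pow_lt_pow_left₀ hρ hρ2.le; norm_num
  have hle1 : h ≤ 27 / 16 * ρ1 ^ 4 := le_trans hle (by nlinarith)
  obtain ⟨hm1, he1⟩ := hx1 h ⟨hpos.le, hle1⟩
  obtain ⟨hm2, he2⟩ := hx2 h ⟨hpos.le, hle⟩
  have hfr : h / ρ1 ^ 4 < h / ρ2 ^ 4 :=
    div_lt_div_of_pos_left hpos (by positivity) hρ4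
  have hlt : x1 h < x2 h := by
    by_contra hc
    push_neg at hc
    have h1 : (1:ℝ) ≤ x2 h := hm2.1
    have : h / ρ2 ^ 4 ≤ h / ρ1 ^ 4 := by
      rw [← he1, ← he2]
      nlinarith [mul_nonneg (mul_nonneg (sub_nonneg.2 hc) (sub_nonneg.2 (hm2.1.trans hc))) (sq_nonneg (x1 h)), mul_nonneg (sub_nonneg.2 hc) (sq_nonneg (x1 h - x2 h)), mul_nonneg (sub_nonneg.2 hc) (mul_nonneg (sub_nonneg.2 h1) (sub_nonneg.2 (h1.trans hc))), hm1.1]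
    linarith
  refine ⟨hlt, ?_⟩
  have hx2pos : (0:ℝ) < x2 h := lt_of_lt_of_le one_pos hm2.1
  rw [div_lt_div_iff₀ (by positivity) hρ2]
  have hx1pos : (0:ℝ) < x1 h := lt_of_lt_of_le one_pos hm1.1
  nlinarith [mul_pos (mul_pos hρ1 hρ2) (sub_pos.2 hlt)]
end
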